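/- Let G be a graph on n = q·t + r vertices with 0 < r < t. If the minimum degree of G satisfies δ(G) ≥ n - q, then every set of t vertices of G has a common neighbor, and consequently G has no maximal clique of size t. -/
import Mathlib


open Finset SimpleGraph

/-- A set of vertices is independent: pairwise nonadjacent. -/
def IndepOn {V : Type*} (G : SimpleGraph V) (S : Set V) : Prop :=
  S.Pairwise fun a b => ¬ G.Adj a b

/-- A maximal independent set (as a finset): independent and not properly
contained in any other independent set. -/
def MaxIndep {V : Type*} (G : SimpleGraph V) (S : Finset V) : Prop :=
  IndepOn G ↑S ∧ ∀ T : Finset V, IndepOn G ↑T → S ⊆ T → S = T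

/-- A maximal clique (as a finset): a clique not properly contained in any other clique. -/
def MaxClique {V : Type*} (G : SimpleGraph V) (S : Finset V) : Prop :=
  G.IsClique ↑S ∧ ∀ T : Finset V, G.IsClique ↑T → S ⊆ T → S = T

theorem stmt4 {V : Type*} [Fintype V] [DecidableEq V] (G : SimpleGraph V) [DecidableRel G.Adj]
    (n q t r : ℕ) (hcard : Fintype.card V = n) (hn : n = q * t + r) (hr0 : 0 < r) (hr : r < t)
    (hδ : n - q ≤ G.minDegree) :
    (∀ S : Finset V, S.card = t → ∃ u, ∀ v ∈ S, G.Adj u v) ∧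
      ∀ S : Finset V, MaxClique G S → S.card ≠ t := by
  have key : ∀ S : Finset V, S.card = t → ∃ u, ∀ v ∈ S, G.Adj u v := by
    intro S hS
    by_contra h
    push_neg at h
    -- every u fails at some v, so univ ⊆ biUnion
    have hsub : (univ : Finset V) ⊆ S.biUnion (fun v => univ.filter (fun u => ¬ G.Adj u v)) := by
      intro u _
      obtain ⟨v, hv, hadj⟩ := h u
      exact mem_biUnion.2 ⟨v, hv, mem_filter.2 ⟨mem_univ u, hadj⟩⟩
    have hle : (n : ℕ) ≤ t * q := by
      calc n = (univ : Finset V).card := by rw [card_univ, hcard]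
        _ ≤ (S.biUnion (fun v => univ.filter (fun u => ¬ G.Adj u v))).card := card_le_card hsub
        _ ≤ ∑ v ∈ S, (univ.filter (fun u => ¬ G.Adj u v)).card := card_biUnion_le
        _ ≤ ∑ v ∈ S, q := by
            refine Finset.sum_le_sum fun v _ => ?_
            have h1 : (univ.filter (fun u => ¬ G.Adj u v)) = univ \ G.neighborFinset v := by
              ext u
              simp [SimpleGraph.mem_neighborFinset, G.adj_comm u v]
            have h2 : n - q ≤ G.degree v := le_trans hδ (G.minDegree_le_degree v)
            rw [h1, card_sdiff_of_subset (subset_univ _), card_univ, hcard, card_neighborFinset_eq_degree]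
            omega
        _ = t * q := by rw [Finset.sum_const, hS, smul_eq_mul]
    rw [mul_comm] at hle
    omega
  refine ⟨key, fun S hmax hcard' => ?_⟩
  obtain ⟨u, hu⟩ := key S hcard'
  have huS : u ∉ S := fun h => G.irrefl (hu u h)
  have hclique : G.IsClique ↑(insert u S) := by
    rw [coe_insert]
    exact hmax.1.insert (fun v hv _ => hu v hv)
  have := hmax.2 (insert u S) hclique (subset_insert u S)
  exact huS (this ▸ mem_insert_self u S)
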